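/- (Monotonicity and limit of the lower bound in Theorem 3.) Fix full-support probability distributions μ ≠ π on 𝒴. For M ≥ 3, define LB(M) as the minimum of 2·B(μ, q) over all probability distributions q on 𝒴 satisfying D(q‖π) ≤ (1/(M−1))·( 2·B(μ,π) + C_π ), with C_π ≜ −log( min_{y∈𝒴} π(y) ). Then the map M ↦ LB(M) is nondecreasing on {3, 4, 5, …}, and lim_{M→∞} LB(M) = 2·B(μ, π). -/

import Mathlib

open Filter Finset Topology

noncomputable section

/-- `p` is a probability distribution on the finite alphabet. -/
def IsProb {𝓨 : Type} [Fintype 𝓨] (p : 𝓨 → ℝ) : Prop :=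
  (∀ y, 0 ≤ p y) ∧ ∑ y, p y = 1

/-- `p` has full support. -/
def FullSupport {𝓨 : Type} (p : 𝓨 → ℝ) : Prop := ∀ y, 0 < p y

/-- Relative entropy `D(q‖p)` (natural log, convention `0·log 0 = 0`,
which holds since `Real.log 0 = 0` in Mathlib). -/
def KL {𝓨 : Type} [Fintype 𝓨] (q p : 𝓨 → ℝ) : ℝ :=
  ∑ y, q y * Real.log (q y / p y)

/-- Bhattacharyya distance `B(p,q) = -log ∑ √(p y) √(q y)`. -/
def Bhat {𝓨 : Type} [Fintype 𝓨] (p q : 𝓨 → ℝ) : ℝ :=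
  - Real.log (∑ y, Real.sqrt (p y) * Real.sqrt (q y))

/-- Feasible values of the lower-bound optimization in Theorem 3:
`2·B(μ,q)` over distributions `q` with
`D(q‖π) ≤ (2B(μ,π) + C_π)/(M-1)`, where `C_π = -log min_y π(y)`. -/
def LBSet {𝓨 : Type} [Fintype 𝓨] (μ π : 𝓨 → ℝ) (M : ℕ) : Set ℝ :=
  {x | ∃ q : 𝓨 → ℝ, IsProb q ∧
    KL q π ≤ (1 / ((M : ℝ) - 1)) * (2 * Bhat μ π + (- Real.log (⨅ y, π y))) ∧
    x = 2 * Bhat μ q}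

section Aux

variable {𝓨 : Type} [Fintype 𝓨] [Nonempty 𝓨]

lemma sum_sqrt_le_one (p q : 𝓨 → ℝ) (hp : IsProb p) (hq : IsProb q) :
    ∑ y, Real.sqrt (p y) * Real.sqrt (q y) ≤ 1 := by
  have hcs := Finset.sum_mul_sq_le_sq_mul_sq Finset.univ
    (fun y => Real.sqrt (p y)) (fun y => Real.sqrt (q y))
  have h1 : ∑ y, Real.sqrt (p y) ^ 2 = 1 := by
    rw [← hp.2]; exact Finset.sum_congr rfl fun y _ => Real.sq_sqrt (hp.1 y)
  have h2 : ∑ y, Real.sqrt (q y) ^ 2 = 1 := by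
    rw [← hq.2]; exact Finset.sum_congr rfl fun y _ => Real.sq_sqrt (hq.1 y)
  rw [h1, h2] at hcs
  have hnn : 0 ≤ ∑ y, Real.sqrt (p y) * Real.sqrt (q y) :=
    Finset.sum_nonneg fun y _ => mul_nonneg (Real.sqrt_nonneg _) (Real.sqrt_nonneg _)
  nlinarith

lemma sum_sqrt_pos (μ q : 𝓨 → ℝ) (hμf : FullSupport μ) (hq : IsProb q) :
    0 < ∑ y, Real.sqrt (μ y) * Real.sqrt (q y) := by
  have hy : ∃ y, 0 < q y := by
    by_contra h
    push_neg at h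
    have hz : ∑ y, q y = 0 :=
      Finset.sum_eq_zero fun y _ => le_antisymm (h y) (hq.1 y)
    rw [hq.2] at hz; norm_num at hz
  obtain ⟨y, hy⟩ := hy
  refine Finset.sum_pos' (fun i _ => mul_nonneg (Real.sqrt_nonneg _) (Real.sqrt_nonneg _))
    ⟨y, Finset.mem_univ y, ?_⟩
  exact mul_pos (Real.sqrt_pos.2 (hμf y)) (Real.sqrt_pos.2 hy)

lemma bhat_nonneg (p q : 𝓨 → ℝ) (hp : IsProb p) (hq : IsProb q) : 0 ≤ Bhat p q := by
  have := sum_sqrt_le_one p q hp hq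
  have hnn : 0 ≤ ∑ y, Real.sqrt (p y) * Real.sqrt (q y) :=
    Finset.sum_nonneg fun y _ => mul_nonneg (Real.sqrt_nonneg _) (Real.sqrt_nonneg _)
  have := Real.log_nonpos hnn this
  simp only [Bhat]; linarith

lemma hellinger_le (q π : 𝓨 → ℝ) (hq : IsProb q) (hπf : FullSupport π) :
    1 - KL q π / 2 ≤ ∑ y, Real.sqrt (q y) * Real.sqrt (π y) := by
  have key : ∀ y, q y - q y * Real.log (q y / π y) / 2 ≤ Real.sqrt (q y) * Real.sqrt (π y) := by
    intro y
    rcases eq_or_lt_of_le (hq.1 y) with h0 | hqy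
    · simp [← h0]
    · have hπy := hπf y
      have hrw : Real.sqrt (q y) * Real.sqrt (π y)
          = q y * Real.exp (Real.log (π y / q y) / 2) := by
        have hsp : 0 < π y / q y := div_pos hπy hqy
        have : Real.exp (Real.log (π y / q y) / 2) = Real.sqrt (π y / q y) := by
          rw [← Real.log_sqrt hsp.le, Real.exp_log (Real.sqrt_pos.2 hsp)]
        rw [this, Real.sqrt_div hπy.le]
        have hq0 : Real.sqrt (q y) ≠ 0 := ne_of_gt (Real.sqrt_pos.2 hqy)
        field_simp
        linear_combination Real.mul_self_sqrt hqy.le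
      have hexp : Real.log (π y / q y) / 2 + 1 ≤ Real.exp (Real.log (π y / q y) / 2) :=
        Real.add_one_le_exp _
      have hneg : Real.log (π y / q y) = - Real.log (q y / π y) := by
        rw [← Real.log_inv, inv_div]
      rw [hrw]
      have := mul_le_mul_of_nonneg_left hexp hqy.le
      rw [hneg] at this
      nlinarith
  calc 1 - KL q π / 2 = ∑ y, (q y - q y * Real.log (q y / π y) / 2) := by
        rw [KL, Finset.sum_sub_distrib, hq.2, ← Finset.sum_div]
    _ ≤ _ := Finset.sum_le_sum fun y _ => key y

lemma diff_sq_le_KL (μ q π : 𝓨 → ℝ) (hμ : IsProb μ) (hq : IsProb q) (hπ : IsProb π)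
    (hπf : FullSupport π) :
    ((∑ y, Real.sqrt (μ y) * Real.sqrt (q y)) - ∑ y, Real.sqrt (μ y) * Real.sqrt (π y)) ^ 2
      ≤ KL q π := by
  have hcs := Finset.sum_mul_sq_le_sq_mul_sq Finset.univ
    (fun y => Real.sqrt (μ y)) (fun y => Real.sqrt (q y) - Real.sqrt (π y))
  have h1 : ∑ y, Real.sqrt (μ y) ^ 2 = 1 := by
    rw [← hμ.2]; exact Finset.sum_congr rfl fun y _ => Real.sq_sqrt (hμ.1 y)
  have h2 : ∑ y, (Real.sqrt (q y) - Real.sqrt (π y)) ^ 2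
      = 2 - 2 * ∑ y, Real.sqrt (q y) * Real.sqrt (π y) := by
    have : ∀ y, (Real.sqrt (q y) - Real.sqrt (π y)) ^ 2
        = q y + π y - 2 * (Real.sqrt (q y) * Real.sqrt (π y)) := by
      intro y
      have e1 := Real.sq_sqrt (hq.1 y)
      have e2 := Real.sq_sqrt (hπ.1 y)
      ring_nf
      nlinarith [Real.sq_sqrt (hq.1 y), Real.sq_sqrt (hπ.1 y)]
    rw [Finset.sum_congr rfl fun y _ => this y]
    rw [Finset.sum_sub_distrib, Finset.sum_add_distrib, hq.2, hπ.2, ← Finset.mul_sum]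
    ring
  have h3 : ∑ y, Real.sqrt (μ y) * (Real.sqrt (q y) - Real.sqrt (π y))
      = (∑ y, Real.sqrt (μ y) * Real.sqrt (q y)) - ∑ y, Real.sqrt (μ y) * Real.sqrt (π y) := by
    rw [← Finset.sum_sub_distrib]
    exact Finset.sum_congr rfl fun y _ => by ring
  rw [h1, h2, h3, one_mul] at hcs
  have hhel := hellinger_le q π hq hπf
  linarith

end Aux

/-- monotonicity and limit of the lower bound in Theorem 3.
The lower bound `LB(M)` is nondecreasing in `M ≥ 3` and converges to
`2·B(μ,π)` as `M → ∞`. -/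
theorem statement11 (𝓨 : Type) [Fintype 𝓨] [Nonempty 𝓨]
    (μ π : 𝓨 → ℝ) (hμ : IsProb μ) (hπ : IsProb π)
    (hμf : FullSupport μ) (hπf : FullSupport π) (hne : μ ≠ π) :
    (∀ M M' : ℕ, 3 ≤ M → M ≤ M' → sInf (LBSet μ π M) ≤ sInf (LBSet μ π M')) ∧
    Tendsto (fun M : ℕ => sInf (LBSet μ π M)) atTop (𝓝 (2 * Bhat μ π)) := by
  classical
  set S := ∑ y, Real.sqrt (μ y) * Real.sqrt (π y) with hS
  have hBπ : Bhat μ π = - Real.log S := rfl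
  have hSpos : 0 < S := sum_sqrt_pos μ π hμf hπ
  set K := 2 * Bhat μ π + (- Real.log (⨅ y, π y)) with hKdef
  have hinf0 : 0 ≤ ⨅ y, π y := le_ciInf fun y => (hπf y).le
  have hinf1 : (⨅ y, π y) ≤ 1 := by
    obtain ⟨y⟩ := (inferInstance : Nonempty 𝓨)
    refine le_trans (ciInf_le (Set.Finite.bddBelow (Set.finite_range π)) y) ?_
    calc π y ≤ ∑ z, π z := Finset.single_le_sum (fun i _ => hπ.1 i) (Finset.mem_univ y)
      _ = 1 := hπ.2
  have hK : 0 ≤ K := by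
    have h1 := bhat_nonneg μ π hμ hπ
    have h2 := Real.log_nonpos hinf0 hinf1
    rw [hKdef]; linarith
  have hKL0 : KL π π = 0 := by
    apply Finset.sum_eq_zero; intro y _
    rw [div_self (ne_of_gt (hπf y)), Real.log_one, mul_zero]
  have hεnonneg : ∀ M : ℕ, 2 ≤ M → 0 ≤ (1 / ((M:ℝ) - 1)) * K := by
    intro M hM
    have h2 : (2:ℝ) ≤ (M:ℝ) := by exact_mod_cast hM
    exact mul_nonneg (div_nonneg zero_le_one (by linarith)) hK
  have hmem : ∀ M : ℕ, 2 ≤ M → 2 * Bhat μ π ∈ LBSet μ π M := fun M hM =>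
    ⟨π, hπ, by rw [hKL0]; exact hεnonneg M hM, rfl⟩
  have hbdd : ∀ M : ℕ, BddBelow (LBSet μ π M) := by
    intro M
    refine ⟨0, fun x hx => ?_⟩
    obtain ⟨q, hq, _, rfl⟩ := hx
    have := bhat_nonneg μ q hμ hq
    linarith
  have hlow : ∀ M : ℕ, ∀ x ∈ LBSet μ π M,
      -2 * Real.log (S + Real.sqrt ((1 / ((M:ℝ) - 1)) * K)) ≤ x := by
    intro M x hx
    obtain ⟨q, hq, hKLq, rfl⟩ := hx
    set T := ∑ y, Real.sqrt (μ y) * Real.sqrt (q y) with hT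
    have hBq : Bhat μ q = - Real.log T := rfl
    have hTpos : 0 < T := sum_sqrt_pos μ q hμf hq
    have h1 : (T - S)^2 ≤ (1 / ((M:ℝ) - 1)) * K :=
      le_trans (diff_sq_le_KL μ q π hμ hq hπ hπf) hKLq
    have h2 : T - S ≤ Real.sqrt ((1 / ((M:ℝ) - 1)) * K) := by
      calc T - S ≤ |T - S| := le_abs_self _
        _ = Real.sqrt ((T - S)^2) := (Real.sqrt_sq_eq_abs _).symm
        _ ≤ _ := Real.sqrt_le_sqrt h1
    have h3 : Real.log T ≤ Real.log (S + Real.sqrt ((1 / ((M:ℝ) - 1)) * K)) :=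
      Real.log_le_log hTpos (by linarith)
    rw [hBq]; linarith
  constructor
  · intro M M' hM hMM'
    have hM3 : (3:ℝ) ≤ (M:ℝ) := by exact_mod_cast hM
    have hMM : (M:ℝ) ≤ (M':ℝ) := by exact_mod_cast hMM'
    refine csInf_le_csInf (hbdd M) ⟨_, hmem M' (by omega)⟩ ?_
    rintro x ⟨q, hq, hKLq, rfl⟩
    refine ⟨q, hq, le_trans hKLq ?_, rfl⟩
    exact mul_le_mul_of_nonneg_right
      (one_div_le_one_div_of_le (by linarith) (by linarith)) hK
  · have hev : ∀ᶠ M : ℕ in atTop, 2 ≤ M := eventually_ge_atTop 2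
    have h1 : Tendsto (fun M : ℕ => (M:ℝ) - 1) atTop atTop :=
      tendsto_atTop_add_const_right _ _ tendsto_natCast_atTop_atTop
    have h2 : Tendsto (fun M : ℕ => 1 / ((M:ℝ) - 1)) atTop (𝓝 0) := by
      simp only [one_div]; exact h1.inv_tendsto_atTop
    have h3 : Tendsto (fun M : ℕ => (1 / ((M:ℝ) - 1)) * K) atTop (𝓝 0) := by
      simpa using h2.mul_const K
    have h4 : Tendsto (fun M : ℕ => Real.sqrt ((1 / ((M:ℝ) - 1)) * K)) atTop (𝓝 0) := by
      have := (Real.continuous_sqrt.tendsto 0).comp h3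
      simpa [Function.comp_def] using this
    have h5 : Tendsto (fun M : ℕ => S + Real.sqrt ((1 / ((M:ℝ) - 1)) * K)) atTop (𝓝 S) := by
      simpa using tendsto_const_nhds.add h4
    have h6 : Tendsto (fun M : ℕ => Real.log (S + Real.sqrt ((1 / ((M:ℝ) - 1)) * K)))
        atTop (𝓝 (Real.log S)) :=
      ((Real.continuousAt_log (ne_of_gt hSpos)).tendsto).comp h5
    have h7 := h6.const_mul (-2 : ℝ)
    have h8 : (-2 : ℝ) * Real.log S = 2 * Bhat μ π := by rw [hBπ]; ring
    rw [← h8]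
    refine tendsto_of_tendsto_of_tendsto_of_le_of_le' h7 tendsto_const_nhds ?_ ?_
    · exact hev.mono fun M hM =>
        le_csInf ⟨_, hmem M hM⟩ (fun x hx => hlow M x hx)
    · exact hev.mono fun M hM => by
        rw [h8]; exact csInf_le (hbdd M) (hmem M hM)
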